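/- The function v(x,t) = v₀ − 4v₀/(4v₀²(x − 6v₀²t)² + 1), with v₀ ∈ ℝ, v₀ ≠ 0, is a solution of the mKdV equation v_t + 6v²v_x + v_{xxx} = 0. -/

import Mathlib

/-- `x`-partial derivative of a scalar function of `(x,t)`. -/
noncomputable def dx (f : ℝ → ℝ → ℝ) : ℝ → ℝ → ℝ :=
  fun x t => deriv (fun y => f y t) x

/-- `t`-partial derivative of a scalar function of `(x,t)`. -/
noncomputable def dt (f : ℝ → ℝ → ℝ) : ℝ → ℝ → ℝ :=
  fun x t => deriv (fun s => f x s) t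

/-- The rational function `v = v₀ − 4v₀/(4v₀²(x − 6v₀²t)² + 1)` solves the mKdV
equation `v_t + 6v²v_x + v_{xxx} = 0`. -/
theorem mkdv_simplest_rational_solution (v0 : ℝ) (hv0 : v0 ≠ 0) :
    let v : ℝ → ℝ → ℝ := fun x t =>
      v0 - 4 * v0 / (4 * v0 ^ 2 * (x - 6 * v0 ^ 2 * t) ^ 2 + 1)
    ∀ x t, dt v x t + 6 * (v x t) ^ 2 * dx v x t + dx (dx (dx v)) x t = 0 := by
  intro v x t
  have hDpos : ∀ x t : ℝ, (0:ℝ) < 4 * v0 ^ 2 * (x - 6 * v0 ^ 2 * t) ^ 2 + 1 := by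
    intro x t; positivity
  have hDne : ∀ x t : ℝ, 4 * v0 ^ 2 * (x - 6 * v0 ^ 2 * t) ^ 2 + 1 ≠ 0 :=
    fun x t => (hDpos x t).ne'
  set A : ℝ → ℝ → ℝ := fun x t =>
    32 * v0 ^ 3 * (x - 6 * v0 ^ 2 * t) / (4 * v0 ^ 2 * (x - 6 * v0 ^ 2 * t) ^ 2 + 1) ^ 2
    with hAdef
  set B : ℝ → ℝ → ℝ := fun x t =>
    (32 * v0 ^ 3 * (4 * v0 ^ 2 * (x - 6 * v0 ^ 2 * t) ^ 2 + 1)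
      - 512 * v0 ^ 5 * (x - 6 * v0 ^ 2 * t) ^ 2)
      / (4 * v0 ^ 2 * (x - 6 * v0 ^ 2 * t) ^ 2 + 1) ^ 3 with hBdef
  set C : ℝ → ℝ → ℝ := fun x t =>
    (-1536 * v0 ^ 5 * (x - 6 * v0 ^ 2 * t) * (4 * v0 ^ 2 * (x - 6 * v0 ^ 2 * t) ^ 2 + 1)
      + 12288 * v0 ^ 7 * (x - 6 * v0 ^ 2 * t) ^ 3)
      / (4 * v0 ^ 2 * (x - 6 * v0 ^ 2 * t) ^ 2 + 1) ^ 4 with hCdef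
  set E : ℝ → ℝ → ℝ := fun x t =>
    -192 * v0 ^ 5 * (x - 6 * v0 ^ 2 * t) / (4 * v0 ^ 2 * (x - 6 * v0 ^ 2 * t) ^ 2 + 1) ^ 2
    with hEdef
  -- derivative of the denominator in x
  have hDx : ∀ t x : ℝ, HasDerivAt (fun y : ℝ => 4 * v0 ^ 2 * (y - 6 * v0 ^ 2 * t) ^ 2 + 1)
      (8 * v0 ^ 2 * (x - 6 * v0 ^ 2 * t)) x := by
    intro t x
    have h1 : HasDerivAt (fun y : ℝ => y - 6 * v0 ^ 2 * t) 1 x := (hasDerivAt_id x).sub_const _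
    have h2 := ((h1.pow 2).const_mul (4 * v0 ^ 2)).add_const 1
    exact h2.congr_deriv (by simp only [Nat.cast_ofNat, Nat.reduceSub, pow_one, mul_one]; ring)
  have h1 : dx v = A := by
    funext x t
    show deriv (fun y => v y t) x = A x t
    have h := ((hasDerivAt_const x (4 * v0)).div (hDx t x) (hDne x t)).const_sub v0
    rw [show deriv (fun y => v y t) x = _ from h.deriv]
    rw [hAdef]
    have hD := hDne x t
    field_simp
    ring
  have h2 : dx A = B := by
    funext x t
    show deriv (fun y => A y t) x = B x t
    have hN : HasDerivAt (fun y : ℝ => 32 * v0 ^ 3 * (y - 6 * v0 ^ 2 * t)) (32 * v0 ^ 3) x := by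
      have := ((hasDerivAt_id x).sub_const (6 * v0 ^ 2 * t)).const_mul (32 * v0 ^ 3)
      simpa using this
    have hDen := (hDx t x).pow 2
    have hD2ne : ((4 * v0 ^ 2 * (x - 6 * v0 ^ 2 * t) ^ 2 + 1) ^ 2 : ℝ) ≠ 0 :=
      pow_ne_zero _ (hDne x t)
    have h := hN.div hDen hD2ne
    rw [show deriv (fun y => A y t) x = _ from h.deriv, hBdef]
    simp only [Pi.pow_apply]
    norm_num
    have hD := hDne x t
    field_simp
    ring
  have h3 : dx B = C := by
    funext x t
    show deriv (fun y => B y t) x = C x t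
    have hN : HasDerivAt (fun y : ℝ =>
        32 * v0 ^ 3 * (4 * v0 ^ 2 * (y - 6 * v0 ^ 2 * t) ^ 2 + 1)
          - 512 * v0 ^ 5 * (y - 6 * v0 ^ 2 * t) ^ 2)
        (32 * v0 ^ 3 * (8 * v0 ^ 2 * (x - 6 * v0 ^ 2 * t))
          - 512 * v0 ^ 5 * (2 * (x - 6 * v0 ^ 2 * t))) x := by
      have ha := (hDx t x).const_mul (32 * v0 ^ 3)
      have hu : HasDerivAt (fun y : ℝ => y - 6 * v0 ^ 2 * t) 1 x := (hasDerivAt_id x).sub_const _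
      have hb := (hu.pow 2).const_mul (512 * v0 ^ 5)
      have := ha.sub hb
      exact this.congr_deriv (by simp only [Nat.cast_ofNat, Nat.reduceSub, pow_one, mul_one])
    have hDen := (hDx t x).pow 3
    have hD3ne : ((4 * v0 ^ 2 * (x - 6 * v0 ^ 2 * t) ^ 2 + 1) ^ 3 : ℝ) ≠ 0 :=
      pow_ne_zero _ (hDne x t)
    have h := hN.div hDen hD3ne
    rw [show deriv (fun y => B y t) x = _ from h.deriv, hCdef]
    simp only [Pi.pow_apply]
    norm_num
    have hD := hDne x t
    field_simp
    ring
  have h4 : dt v = E := by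
    funext x t
    show deriv (fun s => v x s) t = E x t
    have hDt : HasDerivAt (fun s : ℝ => 4 * v0 ^ 2 * (x - 6 * v0 ^ 2 * s) ^ 2 + 1)
        (-48 * v0 ^ 4 * (x - 6 * v0 ^ 2 * t)) t := by
      have hu : HasDerivAt (fun s : ℝ => x - 6 * v0 ^ 2 * s) (-(6 * v0 ^ 2)) t := by
        have := ((hasDerivAt_id t).const_mul (6 * v0 ^ 2)).const_sub x
        simpa using this
      have := ((hu.pow 2).const_mul (4 * v0 ^ 2)).add_const 1
      exact this.congr_deriv (by simp only [Nat.cast_ofNat, Nat.reduceSub, pow_one, mul_one]; ring)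
    have h := ((hasDerivAt_const t (4 * v0)).div hDt (hDne x t)).const_sub v0
    rw [show deriv (fun s => v x s) t = _ from h.deriv, hEdef]
    have hD := hDne x t
    field_simp
    ring
  rw [h1, h2, h3, h4]
  show E x t + 6 * (v x t) ^ 2 * A x t + C x t = 0
  have hD := hDne x t
  simp only [v, hAdef, hCdef, hEdef]
  field_simp
  ring
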